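/- arXiv:1312.7418 — 4 statements merged into one kernel-verified Lean document; each statement's English description precedes it below -/
import Mathlib

section
/- Let G ⊂ Diff^1_+([0,1]) be a group without hyperbolic fixed points and let h be induced from some g ∈ G (i.e., h(x) ∈ {x, g(x)} for all x, and h is the identity off a union of components of [0,1]∖Fix(g)). Then h is a C^1 diffeomorphism without hyperbolic fixed points. -/
open Set Filter

noncomputable section

/-- `f` is an orientation-preserving C¹ diffeomorphism of `[0,1]`, modeled as a
bijection of `ℝ` that equals the identity outside `[0,1]`. -/
def DiffOnIcc (f : Equiv.Perm ℝ) : Prop :=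
  (∀ x : ℝ, x ∉ Icc (0:ℝ) 1 → f x = x) ∧
  MapsTo ⇑f (Icc (0:ℝ) 1) (Icc (0:ℝ) 1) ∧
  StrictMonoOn ⇑f (Icc (0:ℝ) 1) ∧
  ContDiffOn ℝ 1 ⇑f (Icc (0:ℝ) 1) ∧
  ContDiffOn ℝ 1 ⇑f.symm (Icc (0:ℝ) 1) ∧
  ∀ x ∈ Icc (0:ℝ) 1, 0 < derivWithin ⇑f (Icc (0:ℝ) 1) x

/-- The derivative (within `[0,1]`) of a diffeomorphism of `[0,1]`. -/
def D (f : Equiv.Perm ℝ) (x : ℝ) : ℝ := derivWithin ⇑f (Icc (0:ℝ) 1) x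

/-- `f` is an orientation-preserving homeomorphism of `[0,1]`, modeled as a
bijection of `ℝ` that equals the identity outside `[0,1]`. -/
def HomeoOnIcc (f : Equiv.Perm ℝ) : Prop :=
  (∀ x : ℝ, x ∉ Icc (0:ℝ) 1 → f x = x) ∧
  MapsTo ⇑f (Icc (0:ℝ) 1) (Icc (0:ℝ) 1) ∧
  StrictMonoOn ⇑f (Icc (0:ℝ) 1) ∧
  ContinuousOn ⇑f (Icc (0:ℝ) 1)

/-- `(a,b)` is a connected component of `[0,1] \ Fix f`: `a`, `b` are fixed and
there is no fixed point in between. -/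
def IsCompFix (f : Equiv.Perm ℝ) (a b : ℝ) : Prop :=
  a ∈ Icc (0:ℝ) 1 ∧ b ∈ Icc (0:ℝ) 1 ∧ a < b ∧ f a = a ∧ f b = b ∧
  ∀ x ∈ Ioo a b, f x ≠ x

/-- `{a,b}` is a pair of successive fixed points of the group `G`. -/
def SuccFix (G : Subgroup (Equiv.Perm ℝ)) (a b : ℝ) : Prop :=
  ∃ g ∈ G, IsCompFix g a b


open Topology in
/-- Main technical lemma: one-sided version of statement 13, giving everything
except smoothness of the inverse. -/
lemma induced_main (g : Equiv.Perm ℝ) (hg : DiffOnIcc g)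
    (hfix : ∀ x ∈ Icc (0:ℝ) 1, g x = x → derivWithin ⇑g (Icc (0:ℝ) 1) x = 1)
    (h : Equiv.Perm ℝ) (𝓘 : Set (ℝ × ℝ)) (h𝓘 : ∀ p ∈ 𝓘, IsCompFix g p.1 p.2)
    (heq : ∀ x : ℝ, (∃ p ∈ 𝓘, x ∈ Ioo p.1 p.2) → h x = g x)
    (hid : ∀ x : ℝ, (¬ ∃ p ∈ 𝓘, x ∈ Ioo p.1 p.2) → h x = x) :
    (∀ x : ℝ, x ∉ Icc (0:ℝ) 1 → h x = x) ∧
    MapsTo ⇑h (Icc (0:ℝ) 1) (Icc (0:ℝ) 1) ∧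
    StrictMonoOn ⇑h (Icc (0:ℝ) 1) ∧
    ContDiffOn ℝ 1 ⇑h (Icc (0:ℝ) 1) ∧
    (∀ x ∈ Icc (0:ℝ) 1, 0 < derivWithin ⇑h (Icc (0:ℝ) 1) x) ∧
    (∀ x ∈ Icc (0:ℝ) 1, h x = x → derivWithin ⇑h (Icc (0:ℝ) 1) x = 1) := by
  classical
  set s : Set ℝ := Icc (0:ℝ) 1 with hsdef
  set U : Set ℝ := ⋃ p ∈ 𝓘, Ioo p.1 p.2 with hUdef
  have hmemU : ∀ x : ℝ, x ∈ U ↔ ∃ p ∈ 𝓘, x ∈ Ioo p.1 p.2 := fun x => by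
    simp only [hUdef, mem_iUnion, exists_prop]
  have hsub : ∀ p ∈ 𝓘, Ioo p.1 p.2 ⊆ s := fun p hp =>
    subset_trans Ioo_subset_Icc_self (Icc_subset_Icc (h𝓘 p hp).1.1 (h𝓘 p hp).2.1.2)
  have hUs : U ⊆ s := iUnion₂_subset hsub
  have hUopen : IsOpen U := isOpen_biUnion fun p _ => isOpen_Ioo
  obtain ⟨-, hgm, hgmono, hgcd, -, hgpos⟩ := hg
  have huniq : UniqueDiffOn ℝ s := uniqueDiffOn_Icc_zero_one
  have hgdiff : DifferentiableOn ℝ ⇑g s := hgcd.differentiableOn one_ne_zero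
  have hgc : ContinuousOn ⇑g s := hgcd.continuousOn
  have hval : ∀ x ∈ U, h x = g x := fun x hx => heq x ((hmemU x).1 hx)
  have hvout : ∀ x ∉ U, h x = x := fun x hx => hid x (fun hc => hx ((hmemU x).2 hc))
  have hcomp : ∀ p ∈ 𝓘, ∀ x ∈ Ioo p.1 p.2, g x ∈ Ioo p.1 p.2 := by
    intro p hp x hx
    obtain ⟨ha, hb, hab, hga, hgb, -⟩ := h𝓘 p hp
    have hxs : x ∈ s := hsub p hp hx
    constructor
    · have := hgmono ha hxs hx.1; rwa [hga] at this
    · have := hgmono hxs hb hx.2; rwa [hgb] at this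
  have hclo : ∀ x, x ∈ closure U → x ∉ U → x ∈ s ∧ g x = x := by
    intro x hxc hxU
    have hF : IsClosed {y | y ∈ s ∧ g y = y} := by
      have hFe : {y | y ∈ s ∧ g y = y} = s ∩ (fun y => g y - y) ⁻¹' {0} := by
        ext y; simp [sub_eq_zero]
      rw [hFe]
      exact (hgc.sub continuousOn_id).preimage_isClosed_of_isClosed isClosed_Icc
        isClosed_singleton
    have hmem : x ∈ closure {y | y ∈ s ∧ g y = y} := by
      rw [Metric.mem_closure_iff]
      intro ε hε
      obtain ⟨y, hyU, hyd⟩ := Metric.mem_closure_iff.1 hxc ε hε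
      obtain ⟨p, hp, hy⟩ := (hmemU y).1 hyU
      obtain ⟨ha, hb, hab, hga, hgb, -⟩ := h𝓘 p hp
      have hxIoo : x ∉ Ioo p.1 p.2 := fun hc => hxU ((hmemU x).2 ⟨p, hp, hc⟩)
      rcases le_or_gt x p.1 with hxa | hax
      · refine ⟨p.1, ⟨ha, hga⟩, ?_⟩
        rw [Real.dist_eq] at hyd ⊢
        have h1 := (abs_lt.1 hyd).1
        rw [abs_sub_comm, abs_of_nonneg (by linarith : (0:ℝ) ≤ p.1 - x)]
        have := hy.1
        linarith
      · have hbx : p.2 ≤ x := by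
          by_contra hc
          exact hxIoo ⟨hax, lt_of_not_ge hc⟩
        refine ⟨p.2, ⟨hb, hgb⟩, ?_⟩
        rw [Real.dist_eq] at hyd ⊢
        have h1 := (abs_lt.1 hyd).2
        rw [abs_of_nonneg (by linarith [hy.2] : (0:ℝ) ≤ x - p.2)]
        have := hy.2
        linarith
    exact hF.closure_subset hmem
  set D' : ℝ → ℝ := fun x => if x ∈ U then derivWithin ⇑g s x else 1 with hD'def
  have hderiv : ∀ x ∈ s, HasDerivWithinAt ⇑h (D' x) s x := by
    intro x hx
    by_cases hxU : x ∈ U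
    · obtain ⟨p, hp, hxp⟩ := (hmemU x).1 hxU
      have hev : ⇑h =ᶠ[𝓝[s] x] ⇑g := by
        apply Filter.eventuallyEq_of_mem
          (mem_nhdsWithin_of_mem_nhds (isOpen_Ioo.mem_nhds hxp))
        intro y hy
        exact heq y ⟨p, hp, hy⟩
      have hgd := (hgdiff x hx).hasDerivWithinAt
      have hDx : D' x = derivWithin ⇑g s x := if_pos hxU
      rw [hDx]
      exact hgd.congr_of_eventuallyEq hev (hval x hxU)
    · have hD1 : D' x = 1 := if_neg hxU
      rw [hD1]
      by_cases hgx : g x = x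
      · have hgd : HasDerivWithinAt ⇑g 1 s x := by
          have := (hgdiff x hx).hasDerivWithinAt
          rwa [hfix x hx hgx] at this
        rw [hasDerivWithinAt_iff_isLittleO] at hgd ⊢
        refine (Asymptotics.isBigO_of_le _ ?_).trans_isLittleO hgd
        intro y
        by_cases hyU : y ∈ U
        · rw [hval y hyU, hvout x hxU, hgx]
        · rw [hvout y hyU, hvout x hxU, hgx]
          simp
      · have hxc : x ∉ closure U := fun hc => hgx (hclo x hc hxU).2
        have hev : ⇑h =ᶠ[𝓝[s] x] id := by
          apply Filter.eventuallyEq_of_mem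
            (mem_nhdsWithin_of_mem_nhds (isClosed_closure.isOpen_compl.mem_nhds hxc))
          intro y hy
          exact hvout y (fun hc => hy (subset_closure hc))
        exact (hasDerivWithinAt_id x s).congr_of_eventuallyEq hev (hvout x hxU)
  have hDg_cont : ContinuousOn (derivWithin ⇑g s) s :=
    hgcd.continuousOn_derivWithin huniq le_rfl
  have hD'cont : ContinuousOn D' s := by
    intro x hx
    by_cases hxU : x ∈ U
    · have hev : D' =ᶠ[𝓝[s] x] derivWithin ⇑g s := by
        apply Filter.eventuallyEq_of_mem
          (mem_nhdsWithin_of_mem_nhds (hUopen.mem_nhds hxU))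
        intro y hy
        exact if_pos hy
      exact (hDg_cont x hx).congr_of_eventuallyEq hev (if_pos hxU)
    · by_cases hgx : g x = x
      · have hD1 : D' x = 1 := if_neg hxU
        have htend : Tendsto (derivWithin ⇑g s) (𝓝[s] x) (𝓝 1) := by
          have hc := hDg_cont x hx
          rw [ContinuousWithinAt] at hc
          rwa [hfix x hx hgx] at hc
        have habs : Tendsto (fun y => |D' y - 1|) (𝓝[s] x) (𝓝 0) := by
          have hb : ∀ t, |D' t - 1| ≤ |derivWithin ⇑g s t - 1| := by
            intro t
            by_cases ht : t ∈ U
            · have : D' t = derivWithin ⇑g s t := if_pos ht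
              rw [this]
            · have : D' t = 1 := if_neg ht
              rw [this, sub_self, abs_zero]
              exact abs_nonneg _
          have hg0 : Tendsto (fun y => |derivWithin ⇑g s y - 1|) (𝓝[s] x) (𝓝 0) := by
            have := ((htend.sub (tendsto_const_nhds (x := (1:ℝ)))).abs)
            simpa using this
          exact squeeze_zero (fun t => abs_nonneg _) hb hg0
        rw [ContinuousWithinAt, hD1, tendsto_iff_dist_tendsto_zero]
        simpa [Real.dist_eq] using habs
      · have hxc : x ∉ closure U := fun hc => hgx (hclo x hc hxU).2
        have hev : D' =ᶠ[𝓝[s] x] fun _ => 1 := by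
          apply Filter.eventuallyEq_of_mem
            (mem_nhdsWithin_of_mem_nhds (isClosed_closure.isOpen_compl.mem_nhds hxc))
          intro y hy
          exact if_neg (fun hc => hy (subset_closure hc))
        exact continuousWithinAt_const.congr_of_eventuallyEq hev (if_neg hxU)
  have hDval : ∀ x ∈ s, derivWithin ⇑h s x = D' x := fun x hx =>
    (hderiv x hx).derivWithin (huniq x hx)
  have hcdh : ContDiffOn ℝ 1 ⇑h s := by
    rw [show (1 : WithTop ℕ∞) = 0 + 1 from rfl, contDiffOn_succ_iff_derivWithin huniq]
    refine ⟨fun x hx => (hderiv x hx).differentiableWithinAt, by simp, ?_⟩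
    rw [contDiffOn_zero]
    exact hD'cont.congr hDval
  have hpos : ∀ x ∈ s, 0 < derivWithin ⇑h s x := by
    intro x hx
    rw [hDval x hx]
    by_cases hxU : x ∈ U
    · have : D' x = derivWithin ⇑g s x := if_pos hxU
      rw [this]; exact hgpos x hx
    · have : D' x = 1 := if_neg hxU
      rw [this]; exact one_pos
  have hmaps : MapsTo ⇑h s s := by
    intro x hx
    by_cases hxU : x ∈ U
    · obtain ⟨p, hp, hxp⟩ := (hmemU x).1 hxU
      rw [hval x hxU]
      exact hsub p hp (hcomp p hp x hxp)
    · rw [hvout x hxU]; exact hx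
  have hmono : StrictMonoOn ⇑h s := by
    intro x hx y hy hxy
    by_cases hxU : x ∈ U <;> by_cases hyU : y ∈ U
    · rw [hval x hxU, hval y hyU]
      exact hgmono (hUs hxU) (hUs hyU) hxy
    · obtain ⟨p, hp, hxp⟩ := (hmemU x).1 hxU
      rw [hval x hxU, hvout y hyU]
      have h1 := (hcomp p hp x hxp).2
      have hyb : p.2 ≤ y := by
        by_contra hc
        exact hyU ((hmemU y).2 ⟨p, hp, ⟨lt_trans hxp.1 hxy, lt_of_not_ge hc⟩⟩)
      linarith
    · obtain ⟨q, hq, hyq⟩ := (hmemU y).1 hyU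
      rw [hvout x hxU, hval y hyU]
      have h1 := (hcomp q hq y hyq).1
      have hxa : x ≤ q.1 := by
        by_contra hc
        exact hxU ((hmemU x).2 ⟨q, hq, ⟨lt_of_not_ge hc, lt_trans hxy hyq.2⟩⟩)
      linarith
    · rw [hvout x hxU, hvout y hyU]; exact hxy
  have hfixh : ∀ x ∈ s, h x = x → derivWithin ⇑h s x = 1 := by
    intro x hx hhx
    have hxU : x ∉ U := by
      intro hc
      obtain ⟨p, hp, hxp⟩ := (hmemU x).1 hc
      exact (h𝓘 p hp).2.2.2.2.2 x hxp (by rw [← hval x hc, hhx])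
    rw [hDval x hx]
    exact if_neg hxU
  have hidout : ∀ x, x ∉ s → h x = x := fun x hx => hvout x (fun hc => hx (hUs hc))
  exact ⟨hidout, hmaps, hmono, hcdh, hpos, hfixh⟩

/-- a map induced from an element of a group without hyperbolic
fixed points is a C¹ diffeomorphism without hyperbolic fixed points. -/
theorem stmt13 (G : Subgroup (Equiv.Perm ℝ)) (hG : ∀ g ∈ G, DiffOnIcc g)
    (hnh : ∀ g ∈ G, ∀ x ∈ Icc (0:ℝ) 1, g x = x → D g x = 1)
    (g : Equiv.Perm ℝ) (hgG : g ∈ G)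
    (h : Equiv.Perm ℝ) (𝓘 : Set (ℝ × ℝ)) (h𝓘 : ∀ p ∈ 𝓘, IsCompFix g p.1 p.2)
    (heq : ∀ x : ℝ, (∃ p ∈ 𝓘, x ∈ Ioo p.1 p.2) → h x = g x)
    (hid : ∀ x : ℝ, (¬ ∃ p ∈ 𝓘, x ∈ Ioo p.1 p.2) → h x = x) :
    DiffOnIcc h ∧ ∀ x ∈ Icc (0:ℝ) 1, h x = x → D h x = 1 := by
  have hDg := hG g hgG
  have main1 := induced_main g hDg (hnh g hgG) h 𝓘 h𝓘 heq hid
  have hginv : DiffOnIcc g.symm := by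
    have := hG g⁻¹ (inv_mem hgG)
    rwa [Equiv.Perm.inv_def] at this
  have hfixinv : ∀ x ∈ Icc (0:ℝ) 1, g.symm x = x →
      derivWithin ⇑g.symm (Icc (0:ℝ) 1) x = 1 := by
    have := hnh g⁻¹ (inv_mem hgG)
    rw [Equiv.Perm.inv_def] at this
    exact this
  have h𝓘' : ∀ p ∈ 𝓘, IsCompFix g.symm p.1 p.2 := by
    intro p hp
    obtain ⟨ha, hb, hab, hga, hgb, hne⟩ := h𝓘 p hp
    exact ⟨ha, hb, hab, g.symm_apply_eq.2 hga.symm, g.symm_apply_eq.2 hgb.symm,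
      fun x hx hc => hne x hx ((g.symm_apply_eq.1 hc).symm)⟩
  have hgs : MonotoneOn ⇑g (Icc (0:ℝ) 1) := hDg.2.2.1.monotoneOn
  have heq' : ∀ x : ℝ, (∃ p ∈ 𝓘, x ∈ Ioo p.1 p.2) → h.symm x = g.symm x := by
    rintro x ⟨p, hp, hx⟩
    obtain ⟨ha, hb, hab, hga, hgb, hne⟩ := h𝓘 p hp
    have hxs : x ∈ Icc (0:ℝ) 1 :=
      ⟨le_trans ha.1 (le_of_lt hx.1), le_trans (le_of_lt hx.2) hb.2⟩
    have hzs : g.symm x ∈ Icc (0:ℝ) 1 := by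
      by_contra hc
      have hgz := hDg.1 _ hc
      rw [Equiv.apply_symm_apply] at hgz
      exact hc (hgz ▸ hxs)
    have hz1 : p.1 < g.symm x := by
      by_contra hc
      push_neg at hc
      have hle := hgs hzs ha hc
      rw [Equiv.apply_symm_apply, hga] at hle
      exact absurd hx.1 (not_lt.2 hle)
    have hz2 : g.symm x < p.2 := by
      by_contra hc
      push_neg at hc
      have hle := hgs hb hzs hc
      rw [Equiv.apply_symm_apply, hgb] at hle
      exact absurd hx.2 (not_lt.2 hle)
    have hhz : h (g.symm x) = x := by
      rw [heq _ ⟨p, hp, ⟨hz1, hz2⟩⟩, Equiv.apply_symm_apply]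
    exact h.symm_apply_eq.2 hhz.symm
  have hid' : ∀ x : ℝ, (¬ ∃ p ∈ 𝓘, x ∈ Ioo p.1 p.2) → h.symm x = x := by
    intro x hnex
    exact h.symm_apply_eq.2 (hid x hnex).symm
  have main2 := induced_main g.symm hginv hfixinv h.symm 𝓘 h𝓘' heq' hid'
  obtain ⟨hout, hmaps, hmono, hcd, hpos, hfix⟩ := main1
  exact ⟨⟨hout, hmaps, hmono, hcd, main2.2.2.2.1, hpos⟩, hfix⟩
end
end

section
/- Let f ∈ Homeo_+([0,1]), let I = [x₀, f(x₀)] be a fundamental domain of f (with f(y) > y for y in the interior of the support of f), and let g be a nontrivial homeomorphism supported on I with a single component of support whose closure S satisfies S ⊂ Int(supp(f)). If additionally S is contained in the interior of I, then the iterates fⁱ g f^{−i}, i ∈ ℤ, have pairwise disjoint supports and the group ⟨f, g⟩ is isomorphic to the wreath-type product (⊕_{ℤ} ⟨g⟩) ⋊ ℤ, where ℤ acts by shifting the factors. -/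
open Set Filter

noncomputable section

theorem Equiv.Perm.apply_inv_self {α : Type*} (f : Equiv.Perm α) (x : α) : f (f⁻¹ x) = x :=
  Equiv.apply_symm_apply f x

theorem Equiv.Perm.inv_apply_self {α : Type*} (f : Equiv.Perm α) (x : α) : f⁻¹ (f x) = x :=
  Equiv.symm_apply_apply f x

namespace Stmt15Aux

/-- the subgroup of permutations of ℝ that are strictly monotone -/
def smPerm : Subgroup (Equiv.Perm ℝ) where
  carrier := {σ | StrictMono ⇑σ}
  one_mem' := fun x y h => by simpa using h
  mul_mem' := by
    intro σ τ hσ hτ x y h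
    simpa [Equiv.Perm.mul_apply] using hσ (hτ h)
  inv_mem' := by
    intro σ hσ x y h
    by_contra hc
    push_neg at hc
    rcases eq_or_lt_of_le hc with h1 | h1
    · have := congrArg σ h1
      simp only [Equiv.Perm.apply_inv_self] at this
      rw [this] at h; exact lt_irrefl _ h
    · have := hσ h1
      simp only [Equiv.Perm.apply_inv_self] at this
      exact absurd h (not_lt.mpr this.le)

theorem strictMono_of_homeo {f : Equiv.Perm ℝ} (hf : HomeoOnIcc f) : StrictMono ⇑f := by
  obtain ⟨hid, hmaps, hmono, -⟩ := hf
  intro x y hxy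
  by_cases hx : x ∈ Icc (0:ℝ) 1 <;> by_cases hy : y ∈ Icc (0:ℝ) 1
  · exact hmono hx hy hxy
  · have hy1 : 1 < y := by
      rcases lt_or_ge 1 y with h | h
      · exact h
      · exact absurd ⟨le_trans hx.1 hxy.le, h⟩ hy
    have := (hmaps hx).2
    rw [hid y hy]
    exact lt_of_le_of_lt this hy1
  · have hx0 : x < 0 := by
      rcases lt_or_ge x 0 with h | h
      · exact h
      · exact absurd ⟨h, le_trans hxy.le hy.2⟩ hx
    rw [hid x hx]
    exact lt_of_lt_of_le hx0 (hmaps hy).1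
  · rw [hid x hx, hid y hy]; exact hxy

theorem zpow_strictMono {f : Equiv.Perm ℝ} (hf : StrictMono ⇑f) (i : ℤ) :
    StrictMono ⇑(f ^ i) :=
  Subgroup.zpow_mem smPerm (show f ∈ smPerm from hf) i

theorem xseq_strictMono {f : Equiv.Perm ℝ} (hf : StrictMono ⇑f) {x₀ : ℝ} (h0 : x₀ < f x₀) :
    StrictMono (fun i : ℤ => (f ^ i) x₀) := by
  apply strictMono_int_of_lt_succ
  intro n
  have : f ^ (n + 1) = f ^ n * f := zpow_add_one f n
  rw [this, Equiv.Perm.mul_apply]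
  exact zpow_strictMono hf n h0

/-- moved set of the i-th conjugate -/
def M (f : Equiv.Perm ℝ) (a b : ℝ) (i : ℤ) : Set ℝ := Ioo ((f ^ i) a) ((f ^ i) b)

variable {f g : Equiv.Perm ℝ} {x₀ a b : ℝ}

theorem mem_M_iff (hfm : StrictMono ⇑f) {i : ℤ} {x : ℝ} :
    x ∈ M f a b i ↔ (f ^ i)⁻¹ x ∈ Ioo a b := by
  constructor
  · rintro ⟨h1, h2⟩
    constructor
    · have := (zpow_strictMono hfm i).lt_iff_lt (a := a) (b := (f ^ i)⁻¹ x)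
      rw [Equiv.Perm.apply_inv_self] at this
      exact this.mp h1
    · have := (zpow_strictMono hfm i).lt_iff_lt (a := (f ^ i)⁻¹ x) (b := b)
      rw [Equiv.Perm.apply_inv_self] at this
      exact this.mp h2
  · rintro ⟨h1, h2⟩
    constructor
    · have := zpow_strictMono hfm i h1
      rwa [Equiv.Perm.apply_inv_self] at this
    · have := zpow_strictMono hfm i h2
      rwa [Equiv.Perm.apply_inv_self] at this

theorem conj_supp_eq (hfm : StrictMono ⇑f)
    (hsupp : {x : ℝ | g x ≠ x} = Ioo a b) (i : ℤ) :
    {x : ℝ | (f ^ i * g * f ^ (-i)) x ≠ x} = M f a b i := by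
  ext x
  simp only [mem_setOf_eq, Equiv.Perm.mul_apply, zpow_neg]
  rw [mem_M_iff hfm, ← hsupp, mem_setOf_eq]
  constructor
  · intro h hc
    apply h
    rw [hc, Equiv.Perm.apply_inv_self]
  · intro h hc
    apply h
    have := congrArg ⇑(f ^ i)⁻¹ hc
    simpa using this

theorem M_subset (hfm : StrictMono ⇑f) (hx₀a : x₀ < a) (hbfx : b < f x₀) (i : ℤ) :
    M f a b i ⊆ Ioo ((f ^ i) x₀) ((f ^ (i + 1)) x₀) := by
  rintro x ⟨h1, h2⟩
  constructor
  · exact lt_trans (zpow_strictMono hfm i hx₀a) h1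
  · refine lt_trans h2 ?_
    have : f ^ (i + 1) = f ^ i * f := zpow_add_one f i
    rw [this, Equiv.Perm.mul_apply]
    exact zpow_strictMono hfm i hbfx

theorem M_disjoint (hfm : StrictMono ⇑f) (h0 : x₀ < f x₀) (hx₀a : x₀ < a)
    (hbfx : b < f x₀) {i j : ℤ} (hij : i ≠ j) : Disjoint (M f a b i) (M f a b j) := by
  have key : ∀ i j : ℤ, i < j → Disjoint (M f a b i) (M f a b j) := by
    intro i j hlt
    rw [Set.disjoint_left]
    intro x hxi hxj
    have h1 := (M_subset hfm hx₀a hbfx i hxi).2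
    have h2 := (M_subset hfm hx₀a hbfx j hxj).1
    have h3 : (f ^ (i + 1)) x₀ ≤ (f ^ j) x₀ :=
      (xseq_strictMono hfm h0).monotone (by omega)
    linarith
  rcases hij.lt_or_gt with h | h
  · exact key i j h
  · exact (key j i h).symm

theorem xseq_not_mem_M (hfm : StrictMono ⇑f) (h0 : x₀ < f x₀) (hx₀a : x₀ < a)
    (hbfx : b < f x₀) (k i : ℤ) : (f ^ k) x₀ ∉ M f a b i := by
  intro hmem
  have h := M_subset hfm hx₀a hbfx i hmem
  have hm := xseq_strictMono hfm h0 (x₀ := x₀)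
  rcases le_or_gt k i with hk | hk
  · exact absurd h.1 (not_lt.mpr (hm.monotone hk))
  · exact absurd h.2 (not_lt.mpr (hm.monotone (by omega : i + 1 ≤ k)))

/-- the conjugate generators -/
def cg (f g : Equiv.Perm ℝ) (i : ℤ) : Equiv.Perm ℝ := f ^ i * g * f ^ (-i)

/-- the subgroup generated by the conjugates `fⁱ g f⁻ⁱ` -/
def Hgrp (f g : Equiv.Perm ℝ) : Subgroup (Equiv.Perm ℝ) :=
  Subgroup.closure (Set.range (cg f g))

open IsMulCommutative in
/-- the shift action of ℤ -/
def phi (g : Equiv.Perm ℝ) :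
    Multiplicative ℤ →* MulAut (Multiplicative (ℤ →₀ Additive ↥(Subgroup.zpowers g))) :=
  MonoidHom.mk'
    (fun i => AddEquiv.toMultiplicative (Finsupp.domCongr (Equiv.addRight (Multiplicative.toAdd i))))
    (by
      intro i j
      ext n : 1
      apply Multiplicative.toAdd.injective
      ext k : 1
      simp only [Finsupp.domCongr_apply, MulAut.mul_apply, AddEquiv.toMultiplicative_apply_apply]
      simp [Finsupp.domCongr_apply, Equiv.Perm.mul_def]
      congr 1
      omega)

theorem phi_apply (g : Equiv.Perm ℝ) (i : Multiplicative ℤ)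
    (n : Multiplicative (ℤ →₀ Additive ↥(Subgroup.zpowers g))) (j : ℤ) :
    Multiplicative.toAdd ((phi g i) n) j = Multiplicative.toAdd n (j - Multiplicative.toAdd i) := by
  simp only [phi, MonoidHom.mk'_apply, AddEquiv.toMultiplicative_apply_apply]
  simp [Finsupp.domCongr_apply, sub_eq_add_neg]

end Stmt15Aux

open Stmt15Aux in
/-- if `g` is supported on a single interval contained in the
interior of a fundamental domain `[x₀, f x₀]` of `f` (inside the support of `f`,
where `f` moves points to the right), then the conjugates `fⁱ g f⁻ⁱ` have
pairwise disjoint supports, and `⟨f, g⟩` is isomorphic to the wreath-type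
product `(⊕_ℤ ⟨g⟩) ⋊ ℤ`, where `ℤ` acts by shifting the factors. -/
theorem stmt15 (f g : Equiv.Perm ℝ) (hf : HomeoOnIcc f) (hg : HomeoOnIcc g)
    (x₀ a b : ℝ) (hab : a < b)
    (hfund : x₀ < f x₀ ∧ Icc x₀ (f x₀) ⊆ closure {x : ℝ | f x ≠ x})
    (hmove : ∀ y ∈ interior (closure {x : ℝ | f x ≠ x}), y < f y)
    (hsupp : {x : ℝ | g x ≠ x} = Ioo a b)
    (hS : Icc a b ⊆ interior (closure {x : ℝ | f x ≠ x}))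
    (hSI : Icc a b ⊆ Ioo x₀ (f x₀)) :
    (∀ i j : ℤ, i ≠ j →
      Disjoint {x : ℝ | (f ^ i * g * f ^ (-i)) x ≠ x}
        {x : ℝ | (f ^ j * g * f ^ (-j)) x ≠ x}) ∧
    ∃ φ : Multiplicative ℤ →*
        MulAut (Multiplicative (ℤ →₀ Additive ↥(Subgroup.zpowers g))),
      (∀ (i : Multiplicative ℤ)
          (n : Multiplicative (ℤ →₀ Additive ↥(Subgroup.zpowers g))) (j : ℤ),
        Multiplicative.toAdd ((φ i) n) j =
          Multiplicative.toAdd n (j - Multiplicative.toAdd i)) ∧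
      Nonempty (↥(Subgroup.closure {f, g}) ≃*
        SemidirectProduct (Multiplicative (ℤ →₀ Additive ↥(Subgroup.zpowers g)))
          (Multiplicative ℤ) φ) := by
  obtain ⟨h0, hIcc⟩ := hfund
  have hfm : StrictMono ⇑f := strictMono_of_homeo hf
  have hx₀a : x₀ < a := (hSI ⟨le_refl a, hab.le⟩).1
  have hbfx : b < f x₀ := (hSI ⟨hab.le, le_refl b⟩).2
  have hdisj : ∀ i j : ℤ, i ≠ j →
      Disjoint {x : ℝ | (f ^ i * g * f ^ (-i)) x ≠ x}
        {x : ℝ | (f ^ j * g * f ^ (-j)) x ≠ x} := by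
    intro i j hij
    rw [conj_supp_eq hfm hsupp, conj_supp_eq hfm hsupp]
    exact M_disjoint hfm h0 hx₀a hbfx hij
  refine ⟨hdisj, phi g, phi_apply g, ?_⟩
  -- fixed-point facts for powers of g
  have hfixzp : ∀ (u : ↥(Subgroup.zpowers g)) (x : ℝ), x ∉ Set.Ioo a b →
      (↑u : Equiv.Perm ℝ) x = x := by
    rintro ⟨u, hu⟩ x hx
    obtain ⟨k, rfl⟩ := Subgroup.mem_zpowers_iff.mp hu
    rw [← hsupp] at hx
    simp only [mem_setOf_eq, not_not] at hx
    exact Equiv.Perm.zpow_apply_eq_self_of_apply_eq_self hx k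
  -- the generators commute
  have hcomm : ∀ x ∈ Set.range (cg f g), ∀ y ∈ Set.range (cg f g), x * y = y * x := by
    rintro x ⟨i, rfl⟩ y ⟨j, rfl⟩
    rcases eq_or_ne i j with rfl | hij
    · rfl
    · refine Equiv.Perm.Disjoint.commute ?_
      intro z
      by_contra hc
      push_neg at hc
      exact Set.disjoint_left.mp (hdisj i j hij) hc.1 hc.2
  letI : CommGroup ↥(Hgrp f g) := Subgroup.closureCommGroupOfComm hcomm
  have hmem : ∀ (i : ℤ) (x : ↥(Subgroup.zpowers g)),
      ((MulAut.conj (f ^ i)).toMonoidHom.comp (Subgroup.zpowers g).subtype) x ∈ Hgrp f g := by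
    rintro i ⟨x, hx⟩
    obtain ⟨k, rfl⟩ := Subgroup.mem_zpowers_iff.mp hx
    have h1 : (MulAut.conj (f ^ i)).toMonoidHom ((g : Equiv.Perm ℝ) ^ k) =
        ((MulAut.conj (f ^ i)).toMonoidHom g) ^ k := map_zpow _ g k
    simp only [MonoidHom.comp_apply, Subgroup.coe_subtype]
    rw [h1]
    apply Subgroup.zpow_mem
    apply Subgroup.subset_closure
    refine ⟨i, ?_⟩
    simp only [cg, zpow_neg]
    rfl
  set mH : ∀ _ : ℤ, ↥(Subgroup.zpowers g) →* ↥(Hgrp f g) := fun i =>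
    ((MulAut.conj (f ^ i)).toMonoidHom.comp (Subgroup.zpowers g).subtype).codRestrict _ (hmem i)
    with hmH
  set ν' : (ℤ →₀ Additive ↥(Subgroup.zpowers g)) →+ Additive ↥(Hgrp f g) :=
    Finsupp.liftAddHom (fun i => MonoidHom.toAdditive (mH i)) with hν'
  set w : (ℤ →₀ Additive ↥(Subgroup.zpowers g)) → Equiv.Perm ℝ :=
    fun n => ↑(Additive.toMul (ν' n)) with hw
  have hw0 : w 0 = 1 := by simp [hw]
  have hwadd : ∀ m n, w (m + n) = w m * w n := by intro m n; simp [hw]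
  have hwsingle : ∀ (i : ℤ) (u : Additive ↥(Subgroup.zpowers g)),
      w (Finsupp.single i u) = f ^ i * ↑(Additive.toMul u) * (f ^ i)⁻¹ := by
    intro i u
    simp only [hw, hν', Finsupp.liftAddHom_apply_single, hmH]
    exact congrArg (fun z => ((Additive.toMul z : ↥(Hgrp f g)) : Equiv.Perm ℝ))
      (Finsupp.liftAddHom_apply_single _ i u)
  have hwH : ∀ n, w n ∈ Hgrp f g := fun n => SetLike.coe_mem _
  have hconjfix : ∀ (i : ℤ) (u : ↥(Subgroup.zpowers g)) (y : ℝ), y ∉ M f a b i →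
      (f ^ i * ↑u * (f ^ i)⁻¹) y = y := by
    intro i u y hy
    rw [mem_M_iff hfm] at hy
    simp only [Equiv.Perm.mul_apply]
    rw [hfixzp u _ hy, Equiv.Perm.apply_inv_self]
  have hwfix : ∀ (n : ℤ →₀ Additive ↥(Subgroup.zpowers g)) (y : ℝ),
      (∀ i, n i ≠ 0 → y ∉ M f a b i) → w n y = y := by
    intro n
    induction n using Finsupp.induction with
    | zero => intro y _; rw [hw0]; rfl
    | single_add i u n' hni hu ih =>
      intro y hy
      rw [hwadd, Equiv.Perm.mul_apply]
      have hy' : ∀ i', n' i' ≠ 0 → y ∉ M f a b i' := by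
        intro i' hne
        rcases eq_or_ne i' i with rfl | hne2
        · exact absurd (Finsupp.notMem_support_iff.mp hni) hne
        · refine hy i' ?_
          rw [Finsupp.add_apply, Finsupp.single_apply, if_neg (fun h => hne2 h.symm), zero_add]
          exact hne
      rw [ih y hy', hwsingle]
      apply hconjfix
      apply hy i
      rw [Finsupp.add_apply, Finsupp.single_apply, if_pos rfl,
        Finsupp.notMem_support_iff.mp hni, add_zero]
      exact hu
  set ν : Multiplicative (ℤ →₀ Additive ↥(Subgroup.zpowers g)) →* Equiv.Perm ℝ :=
    (Hgrp f g).subtype.comp (AddMonoidHom.toMultiplicativeLeft ν') with hν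
  have hνw : ∀ n, ν n = w (Multiplicative.toAdd n) := fun n => rfl
  set fq : Multiplicative ℤ →* Equiv.Perm ℝ := zpowersHom (Equiv.Perm ℝ) f with hfq
  have hcompat : ∀ q : Multiplicative ℤ,
      ν.comp ((phi g q).toMonoidHom) = (MulAut.conj (fq q)).toMonoidHom.comp ν := by
    intro q
    apply MonoidHom.ext
    intro n
    have key : ∀ x : ℤ →₀ Additive ↥(Subgroup.zpowers g),
        w (Finsupp.equivMapDomain (Equiv.addRight (Multiplicative.toAdd q)) x) =
          f ^ (Multiplicative.toAdd q) * w x * (f ^ (Multiplicative.toAdd q))⁻¹ := by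
      intro x
      induction x using Finsupp.induction with
      | zero => simp [hw0]
      | single_add i u x' hni hu ih =>
        open IsMulCommutative in
        have hea : Finsupp.equivMapDomain (Equiv.addRight (Multiplicative.toAdd q))
            (Finsupp.single i u + x') =
            Finsupp.equivMapDomain (Equiv.addRight (Multiplicative.toAdd q)) (Finsupp.single i u) +
            Finsupp.equivMapDomain (Equiv.addRight (Multiplicative.toAdd q)) x' := by
          rw [← Finsupp.domCongr_apply, ← Finsupp.domCongr_apply, ← Finsupp.domCongr_apply, map_add]
        rw [hea, hwadd, ih, Finsupp.equivMapDomain_single, hwadd, hwsingle, hwsingle]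
        have harr : (Equiv.addRight (Multiplicative.toAdd q)) i = i + Multiplicative.toAdd q := rfl
        rw [harr, show (i + Multiplicative.toAdd q : ℤ) = Multiplicative.toAdd q + i
          from add_comm _ _, zpow_add]
        group
    have hLHS : ν ((phi g q) n) =
        w (Finsupp.equivMapDomain (Equiv.addRight (Multiplicative.toAdd q))
          (Multiplicative.toAdd n)) := by
      rw [hνw]
      congr 1
    simp only [MonoidHom.comp_apply, MulEquiv.coe_toMonoidHom, MulAut.conj_apply]
    rw [hLHS, key, hνw, zpowersHom_apply]
  set π := SemidirectProduct.lift ν fq hcompat with hπ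
  have hπapp : ∀ p, π p = ν p.left * fq p.right := fun p => rfl
  have hinj : Function.Injective ⇑π := by
    rw [injective_iff_map_eq_one]
    rintro ⟨n, q⟩ h1
    have h1' : ν n * fq q = 1 := h1
    have hq0 : Multiplicative.toAdd q = 0 := by
      have e1 : (ν n * fq q) x₀ = x₀ := by rw [h1']; rfl
      rw [Equiv.Perm.mul_apply, hfq, zpowersHom_apply, hνw] at e1
      rw [hwfix _ _ (fun i _ => xseq_not_mem_M hfm h0 hx₀a hbfx _ i)] at e1
      have e2 : (f ^ (Multiplicative.toAdd q)) x₀ = (f ^ (0 : ℤ)) x₀ := by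
        simpa using e1
      exact (xseq_strictMono hfm h0).injective e2
    have hq1 : q = 1 := by
      have : q = Multiplicative.ofAdd (Multiplicative.toAdd q) := rfl
      rw [this, hq0]; rfl
    have hν1 : w (Multiplicative.toAdd n) = 1 := by
      have : fq q = 1 := by rw [hq1, map_one]
      rw [this, mul_one, hνw] at h1'
      exact h1'
    have hn0 : Multiplicative.toAdd n = 0 := by
      apply Finsupp.ext
      intro j
      by_contra hj
      set m : ↥(Subgroup.zpowers g) := Additive.toMul ((Multiplicative.toAdd n) j) with hm
      have hm1 : (↑m : Equiv.Perm ℝ) ≠ 1 := by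
        intro hc
        apply hj
        have h2 : m = 1 := Subtype.ext hc
        have h3 : (Multiplicative.toAdd n) j = Additive.ofMul m := rfl
        rw [h3, h2]; rfl
      obtain ⟨x, hx⟩ : ∃ x, (↑m : Equiv.Perm ℝ) x ≠ x := by
        by_contra hc; push_neg at hc; exact hm1 (Equiv.ext hc)
      have hxI : x ∈ Set.Ioo a b := by
        by_contra hxn; exact hx (hfixzp m x hxn)
      have hyM : (f ^ j) x ∈ M f a b j :=
        ⟨zpow_strictMono hfm j hxI.1, zpow_strictMono hfm j hxI.2⟩
      have hdec : Finsupp.single j ((Multiplicative.toAdd n) j) +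
          Finsupp.erase j (Multiplicative.toAdd n) = Multiplicative.toAdd n :=
        Finsupp.single_add_erase j _
      have e4 : w (Multiplicative.toAdd n) ((f ^ j) x) = (f ^ j) x := by
        rw [hν1]; rfl
      rw [← hdec, hwadd, Equiv.Perm.mul_apply] at e4
      have e5 : w (Finsupp.erase j (Multiplicative.toAdd n)) ((f ^ j) x) = (f ^ j) x := by
        apply hwfix
        intro i hi
        have hij : i ≠ j := by
          rintro rfl
          rw [Finsupp.erase_same] at hi
          exact hi rfl
        intro hmem2
        exact Set.disjoint_left.mp (M_disjoint hfm h0 hx₀a hbfx hij) hmem2 hyM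
      rw [e5, hwsingle] at e4
      simp only [Equiv.Perm.mul_apply, Equiv.Perm.inv_apply_self] at e4
      exact hx ((f ^ j).injective e4)
    have hn1 : n = 1 := by
      have : n = Multiplicative.ofAdd (Multiplicative.toAdd n) := rfl
      rw [this, hn0]; rfl
    rw [hn1, hq1]
    rfl
  have hfc : f ∈ Subgroup.closure ({f, g} : Set (Equiv.Perm ℝ)) :=
    Subgroup.subset_closure (Set.mem_insert f {g})
  have hgc : g ∈ Subgroup.closure ({f, g} : Set (Equiv.Perm ℝ)) :=
    Subgroup.subset_closure (Set.mem_insert_of_mem f rfl)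
  have hrange : π.range = Subgroup.closure {f, g} := by
    apply le_antisymm
    · rintro p ⟨⟨n, q⟩, rfl⟩
      rw [hπapp]
      apply Subgroup.mul_mem
      · have hνH : ν n ∈ Hgrp f g := hwH _
        have hle : Hgrp f g ≤ Subgroup.closure {f, g} := by
          rw [Hgrp, Subgroup.closure_le]
          rintro x ⟨i, rfl⟩
          show f ^ i * g * f ^ (-i) ∈ _
          exact Subgroup.mul_mem _
            (Subgroup.mul_mem _ (Subgroup.zpow_mem _ hfc i) hgc)
            (Subgroup.zpow_mem _ hfc (-i))
        exact hle hνH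
      · rw [hfq, zpowersHom_apply]
        exact Subgroup.zpow_mem _ hfc _
    · rw [Subgroup.closure_le]
      intro x hx
      rcases hx with rfl | hx
      · refine ⟨SemidirectProduct.inr (Multiplicative.ofAdd 1), ?_⟩
        rw [SemidirectProduct.lift_inr, hfq, zpowersHom_apply]
        simp
      · rw [Set.mem_singleton_iff] at hx
        subst hx
        refine ⟨SemidirectProduct.inl (Multiplicative.ofAdd
          (Finsupp.single 0 (Additive.ofMul ⟨x, Subgroup.mem_zpowers x⟩))), ?_⟩
        rw [SemidirectProduct.lift_inl, hνw]
        have : Multiplicative.toAdd (Multiplicative.ofAdd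
            (Finsupp.single (0:ℤ) (Additive.ofMul (⟨x, Subgroup.mem_zpowers x⟩ :
              ↥(Subgroup.zpowers x))))) =
            Finsupp.single (0:ℤ) (Additive.ofMul (⟨x, Subgroup.mem_zpowers x⟩ :
              ↥(Subgroup.zpowers x))) := rfl
        rw [this, hwsingle]
        simp
  exact ⟨((MonoidHom.ofInjective hinj).trans (MulEquiv.subgroupCongr hrange)).symm⟩
end
end

section
/- Let (α_t)_{t∈[0,1)} be a family of orientation-preserving C^1 diffeomorphisms of [0,1] such that the family {log Dα_t} is equicontinuous on [0,1]. Then for every η > 0 there exists ε > 0 such that for every g ∈ Diff^1_+([0,1]) with ‖g − id‖₁ < ε, one has ‖α_t g α_t^{-1} − id‖₁ < η for all t ∈ [0,1). In particular, if g_t → id in the C^1 topology, then α_t g_t α_t^{-1} → id in the C^1 topology. -/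
open Set Filter

noncomputable section

namespace Stmt17Aux

lemma fixed0 {f : Equiv.Perm ℝ} (hid : ∀ x : ℝ, x ∉ Icc (0:ℝ) 1 → f x = x)
    (hmap : MapsTo ⇑f (Icc (0:ℝ) 1) (Icc (0:ℝ) 1))
    (hmono : StrictMonoOn ⇑f (Icc (0:ℝ) 1)) : f 0 = 0 := by
  by_contra h
  have h0 : f 0 ∈ Icc (0:ℝ) 1 := hmap (by norm_num)
  have hpos : 0 < f 0 := lt_of_le_of_ne h0.1 (Ne.symm h)
  have hzI : f 0 / 2 ∈ Icc (0:ℝ) 1 := ⟨by positivity, by linarith [h0.2]⟩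
  obtain ⟨w, hw⟩ : ∃ w, f w = f 0 / 2 := ⟨f.symm _, f.apply_symm_apply _⟩
  by_cases hwI : w ∈ Icc (0:ℝ) 1
  · rcases eq_or_lt_of_le hwI.1 with h0w | h0w
    · rw [← h0w] at hw; linarith
    · have := hmono (by norm_num) hwI h0w
      linarith
  · have := hid w hwI
    rw [this] at hw
    exact hwI (hw ▸ hzI)

lemma symm_maps {f : Equiv.Perm ℝ} (hid : ∀ x : ℝ, x ∉ Icc (0:ℝ) 1 → f x = x) :
    MapsTo ⇑f.symm (Icc (0:ℝ) 1) (Icc (0:ℝ) 1) := by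
  intro x hx
  by_contra h
  have h1 : f (f.symm x) = f.symm x := hid _ h
  rw [f.apply_symm_apply] at h1
  exact h (h1 ▸ hx)

lemma symm_fixed0 {f : Equiv.Perm ℝ} (h0 : f 0 = 0) : f.symm 0 = 0 := by
  conv_lhs => rw [← h0]
  exact f.symm_apply_apply 0

lemma D_symm_mul {f : Equiv.Perm ℝ} (hf : DiffOnIcc f) {x : ℝ} (hx : x ∈ Icc (0:ℝ) 1) :
    D f (f.symm x) * D f.symm x = 1 := by
  obtain ⟨hid, hmap, hmono, hc, hcs, hpos⟩ := hf
  have hy : f.symm x ∈ Icc (0:ℝ) 1 := symm_maps hid hx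
  have hud : UniqueDiffWithinAt ℝ (Icc (0:ℝ) 1) x := uniqueDiffOn_Icc one_pos x hx
  have h1 : derivWithin (⇑f ∘ ⇑f.symm) (Icc (0:ℝ) 1) x
      = D f (f.symm x) * D f.symm x :=
    derivWithin_comp x ((hc.differentiableOn one_ne_zero) _ hy)
      ((hcs.differentiableOn one_ne_zero) _ hx) (symm_maps hid)
  have h2 : (⇑f ∘ ⇑f.symm) = id := by
    funext y; exact f.apply_symm_apply y
  rw [h2] at h1
  rw [← h1, derivWithin_id x _ hud]

lemma D_symm_eq {f : Equiv.Perm ℝ} (hf : DiffOnIcc f) {x : ℝ} (hx : x ∈ Icc (0:ℝ) 1) :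
    D f.symm x = (D f (f.symm x))⁻¹ := by
  have h := D_symm_mul hf hx
  have hy : f.symm x ∈ Icc (0:ℝ) 1 := symm_maps hf.1 hx
  have hp : 0 < D f (f.symm x) := hf.2.2.2.2.2 _ hy
  field_simp at h ⊢; linarith

lemma conj_coe (β g : Equiv.Perm ℝ) : ⇑(β * g * β⁻¹) = ⇑β ∘ (⇑g ∘ ⇑β.symm) := by
  funext y
  simp [Equiv.Perm.mul_apply, Equiv.Perm.inv_def]

lemma D_conj {β g : Equiv.Perm ℝ} (hβ : DiffOnIcc β) (hg : DiffOnIcc g) {x : ℝ}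
    (hx : x ∈ Icc (0:ℝ) 1) :
    D (β * g * β⁻¹) x
      = D β (g (β.symm x)) * (D g (β.symm x) * D β.symm x) := by
  obtain ⟨hidβ, hmapβ, _, hcβ, hcsβ, _⟩ := hβ
  obtain ⟨hidg, hmapg, _, hcg, _, _⟩ := hg
  have hud : UniqueDiffWithinAt ℝ (Icc (0:ℝ) 1) x := uniqueDiffOn_Icc one_pos x hx
  have hy : β.symm x ∈ Icc (0:ℝ) 1 := symm_maps hidβ hx
  have hgy : g (β.symm x) ∈ Icc (0:ℝ) 1 := hmapg hy
  have dβs : DifferentiableWithinAt ℝ (⇑β.symm) (Icc (0:ℝ) 1) x :=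
    (hcsβ.differentiableOn one_ne_zero) _ hx
  have dg : DifferentiableWithinAt ℝ (⇑g) (Icc (0:ℝ) 1) (β.symm x) :=
    (hcg.differentiableOn one_ne_zero) _ hy
  have dβ : DifferentiableWithinAt ℝ (⇑β) (Icc (0:ℝ) 1) (g (β.symm x)) :=
    (hcβ.differentiableOn one_ne_zero) _ hgy
  have hmapc : MapsTo (⇑g ∘ ⇑β.symm) (Icc (0:ℝ) 1) (Icc (0:ℝ) 1) :=
    hmapg.comp (symm_maps hidβ)
  have hin : derivWithin (⇑g ∘ ⇑β.symm) (Icc (0:ℝ) 1) x = D g (β.symm x) * D β.symm x :=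
    derivWithin_comp x dg dβs (symm_maps hidβ)
  have hout : derivWithin (⇑β ∘ (⇑g ∘ ⇑β.symm)) (Icc (0:ℝ) 1) x
      = D β ((⇑g ∘ ⇑β.symm) x) * derivWithin (⇑g ∘ ⇑β.symm) (Icc (0:ℝ) 1) x :=
    derivWithin_comp x dβ (dg.comp x dβs (symm_maps hidβ)) hmapc
  rw [D, conj_coe, hout, hin]
  rfl

lemma diffOn_conj {β g : Equiv.Perm ℝ} (hβ : DiffOnIcc β) (hg : DiffOnIcc g) :
    DifferentiableOn ℝ (⇑(β * g * β⁻¹)) (Icc (0:ℝ) 1) := by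
  rw [conj_coe]
  exact ((hβ.2.2.2.1.differentiableOn one_ne_zero).comp
    ((hg.2.2.2.1.differentiableOn one_ne_zero).comp (hβ.2.2.2.2.1.differentiableOn one_ne_zero)
      (symm_maps hβ.1)) (hg.2.1.comp (symm_maps hβ.1)))

lemma log_close {c s : ℝ} (hs : 0 < s)
    (h : |s - 1| < 1 - Real.exp (-(c/2))) : |Real.log s| ≤ c/2 := by
  rw [abs_lt] at h
  have hlow : Real.exp (-(c/2)) < s := by linarith
  have h1 : -(c/2) < Real.log s := (Real.lt_log_iff_exp_lt hs).mpr hlow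
  have hup : s < Real.exp (c/2) := by
    have hu : 0 < Real.exp (c/2) := Real.exp_pos _
    have he : Real.exp (-(c/2)) = (Real.exp (c/2))⁻¹ := by
      rw [Real.exp_neg]
    rw [he] at h
    nlinarith [sq_nonneg (Real.exp (c/2) - 1), mul_inv_cancel₀ (ne_of_gt hu), h.2]
  have h2 : Real.log s < c/2 := by
    have := Real.log_lt_log hs hup
    rwa [Real.log_exp] at this
  rw [abs_le]; constructor <;> linarith

lemma exp_close {η r : ℝ} (hη : 0 < η) (hr : 0 < r)
    (h : |Real.log r| < Real.log (1 + η/2)) : |r - 1| ≤ η/2 := by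
  rw [abs_lt] at h
  have hpos : (0:ℝ) < 1 + η/2 := by linarith
  have hup : r < 1 + η/2 := (Real.log_lt_log_iff hr hpos).mp h.2
  have hlow : (1 + η/2)⁻¹ < r := by
    have h3 : Real.log (1 + η/2)⁻¹ < Real.log r := by
      rw [Real.log_inv]; linarith
    exact (Real.log_lt_log_iff (by positivity) hr).mp h3
  have hv : 0 < (1 + η/2)⁻¹ := by positivity
  rw [abs_le]
  constructor
  · nlinarith [mul_inv_cancel₀ (ne_of_gt hpos)]
  · linarith

end Stmt17Aux

open Stmt17Aux in
/-- conjugating by a family of diffeomorphisms with equicontinuous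
log-derivative keeps maps C¹-close to the identity, uniformly in the parameter. -/
theorem stmt17 (α : ℝ → Equiv.Perm ℝ) (hα : ∀ t ∈ Ico (0:ℝ) 1, DiffOnIcc (α t))
    (hequi : ∀ ε > (0:ℝ), ∃ δ > (0:ℝ), ∀ t ∈ Ico (0:ℝ) 1,
      ∀ x ∈ Icc (0:ℝ) 1, ∀ y ∈ Icc (0:ℝ) 1, |x - y| < δ →
        |Real.log (D (α t) x) - Real.log (D (α t) y)| < ε) :
    (∀ η > (0:ℝ), ∃ ε > (0:ℝ), ∀ g : Equiv.Perm ℝ, DiffOnIcc g →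
      (∀ x ∈ Icc (0:ℝ) 1, |g x - x| < ε ∧ |D g x - 1| < ε) →
      ∀ t ∈ Ico (0:ℝ) 1, ∀ x ∈ Icc (0:ℝ) 1,
        |(α t * g * (α t)⁻¹) x - x| < η ∧ |D (α t * g * (α t)⁻¹) x - 1| < η) ∧
    (∀ g : ℝ → Equiv.Perm ℝ, (∀ t ∈ Ico (0:ℝ) 1, DiffOnIcc (g t)) →
      (∀ ε > (0:ℝ), ∃ t₀ ∈ Ico (0:ℝ) 1, ∀ t ∈ Ico (0:ℝ) 1, t₀ ≤ t →
        ∀ x ∈ Icc (0:ℝ) 1, |g t x - x| < ε ∧ |D (g t) x - 1| < ε) →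
      ∀ ε > (0:ℝ), ∃ t₀ ∈ Ico (0:ℝ) 1, ∀ t ∈ Ico (0:ℝ) 1, t₀ ≤ t →
        ∀ x ∈ Icc (0:ℝ) 1, |(α t * g t * (α t)⁻¹) x - x| < ε ∧
          |D (α t * g t * (α t)⁻¹) x - 1| < ε) := by
  have part1 : ∀ η > (0:ℝ), ∃ ε > (0:ℝ), ∀ g : Equiv.Perm ℝ, DiffOnIcc g →
      (∀ x ∈ Icc (0:ℝ) 1, |g x - x| < ε ∧ |D g x - 1| < ε) →
      ∀ t ∈ Ico (0:ℝ) 1, ∀ x ∈ Icc (0:ℝ) 1,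
        |(α t * g * (α t)⁻¹) x - x| < η ∧ |D (α t * g * (α t)⁻¹) x - 1| < η := by
    intro η hη
    set c := Real.log (1 + η/2) with hc_def
    have hc : 0 < c := Real.log_pos (by linarith)
    obtain ⟨δ, hδ, hδa⟩ := hequi (c/2) (by positivity)
    set ε₂ := 1 - Real.exp (-(c/2)) with hε₂_def
    have hε₂ : 0 < ε₂ := by
      have : Real.exp (-(c/2)) < Real.exp 0 := Real.exp_lt_exp.mpr (by linarith)
      rw [Real.exp_zero] at this
      simp only [hε₂_def]; linarith
    refine ⟨min δ ε₂, lt_min hδ hε₂, ?_⟩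
    intro g hg hgsmall t ht x hx
    have hβ := hα t ht
    set β := α t with hβ_def
    -- derivative bound on all of [0,1]
    have hDbound : ∀ z ∈ Icc (0:ℝ) 1, |D (β * g * β⁻¹) z - 1| ≤ η/2 := by
      intro z hz
      have hy : β.symm z ∈ Icc (0:ℝ) 1 := symm_maps hβ.1 hz
      have hgy : g (β.symm z) ∈ Icc (0:ℝ) 1 := hg.2.1 hy
      have hA : 0 < D β (g (β.symm z)) := hβ.2.2.2.2.2 _ hgy
      have hA' : 0 < D β (β.symm z) := hβ.2.2.2.2.2 _ hy
      have hB : 0 < D g (β.symm z) := hg.2.2.2.2.2 _ hy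
      have hDval : D (β * g * β⁻¹) z
          = D β (g (β.symm z)) * (D g (β.symm z) * (D β (β.symm z))⁻¹) := by
        rw [D_conj hβ hg hz, D_symm_eq hβ hz]
      have hDpos : 0 < D (β * g * β⁻¹) z := by
        rw [hDval]; positivity
      have hlogeq : Real.log (D (β * g * β⁻¹) z)
          = (Real.log (D β (g (β.symm z))) - Real.log (D β (β.symm z)))
            + Real.log (D g (β.symm z)) := by
        rw [hDval, Real.log_mul (ne_of_gt hA) (by positivity),
          Real.log_mul (ne_of_gt hB) (by positivity), Real.log_inv]
        ring
      have hterm1 : |Real.log (D β (g (β.symm z))) - Real.log (D β (β.symm z))| < c/2 := by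
        apply hδa t ht _ hgy _ hy
        have := (hgsmall _ hy).1
        calc |g (β.symm z) - β.symm z| < min δ ε₂ := this
          _ ≤ δ := min_le_left _ _
      have hterm2 : |Real.log (D g (β.symm z))| ≤ c/2 := by
        apply log_close hB
        have := (hgsmall _ hy).2
        calc |D g (β.symm z) - 1| < min δ ε₂ := this
          _ ≤ ε₂ := min_le_right _ _
      have hlogsmall : |Real.log (D (β * g * β⁻¹) z)| < c := by
        rw [hlogeq]
        calc |(Real.log (D β (g (β.symm z))) - Real.log (D β (β.symm z)))
              + Real.log (D g (β.symm z))|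
            ≤ |Real.log (D β (g (β.symm z))) - Real.log (D β (β.symm z))|
              + |Real.log (D g (β.symm z))| := abs_add_le _ _
          _ < c/2 + c/2 := by exact add_lt_add_of_lt_of_le hterm1 hterm2
          _ = c := by ring
      exact exp_close hη hDpos hlogsmall
    refine ⟨?_, lt_of_le_of_lt (hDbound x hx) (by linarith)⟩
    -- C⁰ bound: the conjugate fixes 0 and has derivative close to 1
    have hβ0 : β 0 = 0 := fixed0 hβ.1 hβ.2.1 hβ.2.2.1
    have hg0 : g 0 = 0 := fixed0 hg.1 hg.2.1 hg.2.2.1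
    have hconj0 : (β * g * β⁻¹) (0:ℝ) = 0 := by
      simp [Equiv.Perm.mul_apply, Equiv.Perm.inv_def, symm_fixed0 hβ0, hg0, hβ0]
    have hdiff : DifferentiableOn ℝ (⇑(β * g * β⁻¹)) (Icc (0:ℝ) 1) := diffOn_conj hβ hg
    have hu : DifferentiableOn ℝ (fun y => (β * g * β⁻¹) y - y) (Icc (0:ℝ) 1) :=
      hdiff.sub differentiableOn_id
    have hubound : ∀ z ∈ Icc (0:ℝ) 1,
        ‖derivWithin (fun y => (β * g * β⁻¹) y - y) (Icc (0:ℝ) 1) z‖ ≤ η/2 := by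
      intro z hz
      have hud : UniqueDiffWithinAt ℝ (Icc (0:ℝ) 1) z := uniqueDiffOn_Icc one_pos z hz
      have hder : derivWithin (fun y => (β * g * β⁻¹) y - y) (Icc (0:ℝ) 1) z
          = D (β * g * β⁻¹) z - derivWithin (fun y : ℝ => y) (Icc (0:ℝ) 1) z :=
        derivWithin_fun_sub (hdiff z hz) differentiableWithinAt_id
      have hid2 : derivWithin (fun y : ℝ => y) (Icc (0:ℝ) 1) z = 1 :=
        derivWithin_id' z _ hud
      rw [hder, hid2, Real.norm_eq_abs]
      exact hDbound z hz
    have hest := Convex.norm_image_sub_le_of_norm_derivWithin_le hu hubound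
      (convex_Icc 0 1) (by norm_num : (0:ℝ) ∈ Icc (0:ℝ) 1) hx
    simp only [hconj0, sub_zero, Real.norm_eq_abs] at hest
    have hx1 : |x| ≤ 1 := by
      rw [abs_le]; exact ⟨by linarith [hx.1], hx.2⟩
    calc |(β * g * β⁻¹) x - x| ≤ η/2 * |x| := hest
      _ ≤ η/2 * 1 := by
          apply mul_le_mul_of_nonneg_left hx1 (by linarith)
      _ < η := by linarith
  refine ⟨part1, ?_⟩
  intro g hgdiff hconv ε hε
  obtain ⟨ε', hε', H⟩ := part1 ε hε
  obtain ⟨t₀, ht₀, ht⟩ := hconv ε' hε'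
  exact ⟨t₀, ht₀, fun t htI htt x hx =>
    H (g t) (hgdiff t htI) (ht t htI htt) t htI x hx⟩
end
end

section
/- Let G ⊂ Homeo_+([0,1]) be a group without linked fixed points, let {a,b} be a pair of successive fixed points (for some f ∈ G), and let g ∈ G. Then either g([a,b]) = [a,b], or g((a,b)) ∩ (a,b) = ∅. -/
open Set Filter

noncomputable section

/-- Two pairs of successive fixed points are linked if one of the open intervals
contains exactly one endpoint of the other pair. -/
def LinkedPairs (a b c d : ℝ) : Prop :=
  (∃! x, x ∈ ({c, d} : Set ℝ) ∩ Ioo a b) ∨ (∃! x, x ∈ ({a, b} : Set ℝ) ∩ Ioo c d)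

lemma homeo_symm_mapsTo {g : Equiv.Perm ℝ} (hg : HomeoOnIcc g) :
    MapsTo ⇑g.symm (Icc (0:ℝ) 1) (Icc (0:ℝ) 1) := by
  intro y hy
  by_contra h
  have h1 := hg.1 _ h
  rw [Equiv.apply_symm_apply] at h1
  rw [← h1] at h
  exact h hy

lemma homeo_map_zero {g : Equiv.Perm ℝ} (hg : HomeoOnIcc g) : g 0 = 0 := by
  have h0 : (0:ℝ) ∈ Icc (0:ℝ) 1 := ⟨le_refl 0, zero_le_one⟩
  have hs : g.symm 0 ∈ Icc (0:ℝ) 1 := homeo_symm_mapsTo hg h0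
  rcases eq_or_lt_of_le hs.1 with h | h
  · nth_rewrite 1 [h]
    exact Equiv.apply_symm_apply _ _
  · have h2 := hg.2.2.1 h0 hs h
    rw [Equiv.apply_symm_apply] at h2
    have h3 : (0:ℝ) ≤ g 0 := (hg.2.1 h0).1
    linarith

lemma conj_isCompFix {g f : Equiv.Perm ℝ} (hg : HomeoOnIcc g) {a b : ℝ}
    (hab : IsCompFix f a b) : IsCompFix (g * f * g⁻¹) (g a) (g b) := by
  obtain ⟨ha, hb, hlt, hfa, hfb, hno⟩ := hab
  have hga := hg.2.1 ha
  have hgb := hg.2.1 hb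
  refine ⟨hga, hgb, hg.2.2.1 ha hb hlt, ?_, ?_, ?_⟩
  · simp [Equiv.Perm.mul_apply, hfa]
  · simp [Equiv.Perm.mul_apply, hfb]
  · intro x hx hfix
    have hx01 : x ∈ Icc (0:ℝ) 1 := ⟨le_trans hga.1 hx.1.le, le_trans hx.2.le hgb.2⟩
    have hy : g.symm x ∈ Icc (0:ℝ) 1 := homeo_symm_mapsTo hg hx01
    have hgy : g (g.symm x) = x := Equiv.apply_symm_apply _ _
    have h1 : a < g.symm x := by
      by_contra h
      push_neg at h
      have := (hg.2.2.1.monotoneOn) hy ha h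
      rw [hgy] at this
      exact absurd hx.1 (not_lt.mpr this)
    have h2 : g.symm x < b := by
      by_contra h
      push_neg at h
      have := (hg.2.2.1.monotoneOn) hb hy h
      rw [hgy] at this
      exact absurd hx.2 (not_lt.mpr this)
    have h3 : g (f (g.symm x)) = x := by
      simpa [Equiv.Perm.mul_apply, Equiv.Perm.inv_def] using hfix
    have h4 : f (g.symm x) = g.symm x := by
      apply g.injective
      rw [h3, hgy]
    exact hno _ ⟨h1, h2⟩ h4

lemma exists_compFix_linked {g : Equiv.Perm ℝ} (hg : HomeoOnIcc g) {a b p : ℝ}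
    (ha : a ∈ Icc (0:ℝ) 1) (hb : b ∈ Icc (0:ℝ) 1)
    (hga : g a ≠ a) (hp : p ∈ Ioo a b) (hgp : g p = p) :
    ∃ u v : ℝ, IsCompFix g u v ∧ u < a ∧ a < v ∧ v < b := by
  have hsub : Icc a b ⊆ Icc (0:ℝ) 1 := Icc_subset_Icc ha.1 hb.2
  have hsub0 : Icc (0:ℝ) a ⊆ Icc (0:ℝ) 1 := Icc_subset_Icc le_rfl ha.2
  have hcont : ContinuousOn (fun x => g x - x) (Icc (0:ℝ) 1) :=
    hg.2.2.2.sub continuousOn_id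
  set S := Icc a b ∩ (fun x => g x - x) ⁻¹' {0} with hS
  set T := Icc (0:ℝ) a ∩ (fun x => g x - x) ⁻¹' {0} with hT
  have hSclosed : IsClosed S :=
    (hcont.mono hsub).preimage_isClosed_of_isClosed isClosed_Icc isClosed_singleton
  have hTclosed : IsClosed T :=
    (hcont.mono hsub0).preimage_isClosed_of_isClosed isClosed_Icc isClosed_singleton
  have hpS : p ∈ S := ⟨⟨hp.1.le, hp.2.le⟩, by simp [hgp]⟩
  have h0T : (0:ℝ) ∈ T := ⟨⟨le_rfl, ha.1⟩, by simp [homeo_map_zero hg]⟩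
  have hSbdd : BddBelow S := ⟨a, fun x hx => hx.1.1⟩
  have hTbdd : BddAbove T := ⟨a, fun x hx => hx.1.2⟩
  set v := sInf S with hv
  set u := sSup T with hu
  have hvS : v ∈ S := hSclosed.csInf_mem ⟨p, hpS⟩ hSbdd
  have huT : u ∈ T := hTclosed.csSup_mem ⟨0, h0T⟩ hTbdd
  have hvfix : g v = v := by
    have := hvS.2
    simp only [mem_preimage, mem_singleton_iff, sub_eq_zero] at this
    exact this
  have hufix : g u = u := by
    have := huT.2
    simp only [mem_preimage, mem_singleton_iff, sub_eq_zero] at this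
    exact this
  have hua : u < a := lt_of_le_of_ne huT.1.2 (fun h => hga (h ▸ hufix))
  have hav : a < v := lt_of_le_of_ne hvS.1.1 (fun h => hga (by rw [h]; exact hvfix))
  have hvp : v ≤ p := csInf_le hSbdd hpS
  have hvb : v < b := lt_of_le_of_lt hvp hp.2
  refine ⟨u, v, ⟨hsub0 huT.1, hsub hvS.1, hua.trans hav, hufix, hvfix, ?_⟩, hua, hav, hvb⟩
  intro x hx hfix
  rcases le_or_gt x a with h | h
  · have hxT : x ∈ T := ⟨⟨le_trans huT.1.1 hx.1.le, h⟩, by simp [hfix]⟩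
    exact absurd (le_csSup hTbdd hxT) (not_le.mpr hx.1)
  · have hxS : x ∈ S := ⟨⟨h.le, le_trans hx.2.le hvS.1.2⟩, by simp [hfix]⟩
    exact absurd (csInf_le hSbdd hxS) (not_le.mpr hx.2)

/-- for a group without linked fixed points, an interval of
successive fixed points is either preserved or moved off itself by any element. -/
theorem stmt18 (G : Subgroup (Equiv.Perm ℝ)) (hG : ∀ g ∈ G, HomeoOnIcc g)
    (hnl : ∀ a b c d : ℝ, SuccFix G a b → SuccFix G c d → ¬ LinkedPairs a b c d)
    (f : Equiv.Perm ℝ) (hfG : f ∈ G) (a b : ℝ) (hab : IsCompFix f a b)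
    (g : Equiv.Perm ℝ) (hgG : g ∈ G) :
    ⇑g '' Icc a b = Icc a b ∨ Disjoint (⇑g '' Ioo a b) (Ioo a b) := by
  have hgH := hG g hgG
  have hmono := hgH.2.2.1
  have hmaps := hgH.2.1
  have hcont := hgH.2.2.2
  have ha : a ∈ Icc (0:ℝ) 1 := hab.1
  have hb : b ∈ Icc (0:ℝ) 1 := hab.2.1
  have haltb : a < b := hab.2.2.1
  have hsub : Icc a b ⊆ Icc (0:ℝ) 1 := Icc_subset_Icc ha.1 hb.2
  have hc : g a ∈ Icc (0:ℝ) 1 := hmaps ha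
  have hd : g b ∈ Icc (0:ℝ) 1 := hmaps hb
  have hcd : g a < g b := hmono ha hb haltb
  have hSab : SuccFix G a b := ⟨f, hfG, hab⟩
  have hSconj : SuccFix G (g a) (g b) :=
    ⟨g * f * g⁻¹, mul_mem (mul_mem hgG hfG) (inv_mem hgG), conj_isCompFix hgH hab⟩
  have himg : ⇑g '' Ioo a b ⊆ Ioo (g a) (g b) := by
    rintro x ⟨y, hy, rfl⟩
    have hy01 : y ∈ Icc (0:ℝ) 1 := hsub ⟨hy.1.le, hy.2.le⟩
    exact ⟨hmono ha hy01 hy.1, hmono hy01 hb hy.2⟩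
  by_cases hba : b ≤ g a
  · right
    rw [Set.disjoint_left]
    intro x hx hx'
    exact absurd hx'.2 (not_lt.mpr (hba.trans (himg hx).1.le))
  by_cases hab' : g b ≤ a
  · right
    rw [Set.disjoint_left]
    intro x hx hx'
    exact absurd hx'.1 (not_lt.mpr ((himg hx).2.le.trans hab'))
  push_neg at hba hab'
  rcases lt_trichotomy (g a) a with h1 | h1 | h1 <;>
    rcases lt_trichotomy (g b) b with h2 | h2 | h2
  -- case g a < a, g b < b : a is the unique element of {a,b} in (g a, g b)
  · exfalso
    apply hnl a b (g a) (g b) hSab hSconj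
    right
    refine ⟨a, ⟨Or.inl rfl, h1, hab'⟩, ?_⟩
    rintro y ⟨hy1, hy2⟩
    simp only [Set.mem_insert_iff, Set.mem_singleton_iff] at hy1
    rcases hy1 with rfl | rfl
    · rfl
    · exact absurd hy2.2 (not_lt.mpr h2.le)
  -- case g a < a, g b = b : a is the unique element of {a,b} in (g a, g b)
  · exfalso
    apply hnl a b (g a) (g b) hSab hSconj
    right
    refine ⟨a, ⟨Or.inl rfl, h1, hab'⟩, ?_⟩
    rintro y ⟨hy1, hy2⟩
    simp only [Set.mem_insert_iff, Set.mem_singleton_iff] at hy1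
    rcases hy1 with rfl | rfl
    · rfl
    · rw [h2] at hy2
      exact absurd hy2.2 (lt_irrefl _)
  -- case g a < a, b < g b : outer nesting, g has a fixed point in (a,b)
  · exfalso
    have hivt := intermediate_value_Ioo haltb.le
      ((hcont.mono hsub).sub continuousOn_id)
    have h0 : (0:ℝ) ∈ Ioo (g a - a) (g b - b) := ⟨by linarith, by linarith⟩
    obtain ⟨p, hp, hφp⟩ := hivt h0
    have hgp : g p = p := by
      simp only [Pi.sub_apply, id_eq, id, sub_eq_zero] at hφp
      exact hφp
    obtain ⟨u, v, hcomp, hua, hav, hvb⟩ :=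
      exists_compFix_linked hgH ha hb h1.ne hp hgp
    apply hnl a b u v hSab ⟨g, hgG, hcomp⟩
    left
    refine ⟨v, ⟨Or.inr rfl, hav, hvb⟩, ?_⟩
    rintro y ⟨hy1, hy2⟩
    simp only [Set.mem_insert_iff, Set.mem_singleton_iff] at hy1
    rcases hy1 with rfl | rfl
    · exact absurd hy2.1 (not_lt.mpr hua.le)
    · rfl
  -- case g a = a, g b < b : g b is the unique element of {g a, g b} in (a, b)
  · exfalso
    apply hnl a b (g a) (g b) hSab hSconj
    left
    refine ⟨g b, ⟨Or.inr rfl, hab', h2⟩, ?_⟩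
    rintro y ⟨hy1, hy2⟩
    simp only [Set.mem_insert_iff, Set.mem_singleton_iff] at hy1
    rcases hy1 with rfl | rfl
    · rw [h1] at hy2
      exact absurd hy2.1 (lt_irrefl _)
    · rfl
  -- case g a = a, g b = b : the interval is preserved
  · left
    have hsubset : ⇑g '' Icc a b ⊆ Icc a b := by
      rintro x ⟨y, hy, rfl⟩
      have hy01 : y ∈ Icc (0:ℝ) 1 := hsub hy
      constructor
      · rw [← h1]; exact hmono.monotoneOn ha hy01 hy.1
      · rw [← h2]; exact hmono.monotoneOn hy01 hb hy.2
    have hsup := intermediate_value_Icc haltb.le (hcont.mono hsub)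
    rw [h1, h2] at hsup
    exact Subset.antisymm hsubset hsup
  -- case g a = a, b < g b : b is the unique element of {a,b} in (g a, g b)
  · exfalso
    apply hnl a b (g a) (g b) hSab hSconj
    right
    refine ⟨b, ⟨Or.inr rfl, by rw [h1]; exact haltb, h2⟩, ?_⟩
    rintro y ⟨hy1, hy2⟩
    simp only [Set.mem_insert_iff, Set.mem_singleton_iff] at hy1
    rcases hy1 with rfl | rfl
    · rw [h1] at hy2
      exact absurd hy2.1 (lt_irrefl _)
    · rfl
  -- case a < g a, g b < b : inner nesting, g has a fixed point in (a,b)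
  · exfalso
    have hivt := intermediate_value_Ioo' haltb.le
      ((hcont.mono hsub).sub continuousOn_id)
    have h0 : (0:ℝ) ∈ Ioo (g b - b) (g a - a) := ⟨by linarith, by linarith⟩
    obtain ⟨p, hp, hφp⟩ := hivt h0
    have hgp : g p = p := by
      simp only [Pi.sub_apply, id_eq, id, sub_eq_zero] at hφp
      exact hφp
    obtain ⟨u, v, hcomp, hua, hav, hvb⟩ :=
      exists_compFix_linked hgH ha hb h1.ne' hp hgp
    apply hnl a b u v hSab ⟨g, hgG, hcomp⟩
    left
    refine ⟨v, ⟨Or.inr rfl, hav, hvb⟩, ?_⟩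
    rintro y ⟨hy1, hy2⟩
    simp only [Set.mem_insert_iff, Set.mem_singleton_iff] at hy1
    rcases hy1 with rfl | rfl
    · exact absurd hy2.1 (not_lt.mpr hua.le)
    · rfl
  -- case a < g a, g b = b : g a is the unique element of {g a, g b} in (a, b)
  · exfalso
    apply hnl a b (g a) (g b) hSab hSconj
    left
    refine ⟨g a, ⟨Or.inl rfl, h1, hba⟩, ?_⟩
    rintro y ⟨hy1, hy2⟩
    simp only [Set.mem_insert_iff, Set.mem_singleton_iff] at hy1
    rcases hy1 with rfl | rfl
    · rfl
    · rw [h2] at hy2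
      exact absurd hy2.2 (lt_irrefl _)
  -- case a < g a, b < g b : g a is the unique element of {g a, g b} in (a, b)
  · exfalso
    apply hnl a b (g a) (g b) hSab hSconj
    left
    refine ⟨g a, ⟨Or.inl rfl, h1, hba⟩, ?_⟩
    rintro y ⟨hy1, hy2⟩
    simp only [Set.mem_insert_iff, Set.mem_singleton_iff] at hy1
    rcases hy1 with rfl | rfl
    · rfl
    · exact absurd hy2.2 (not_lt.mpr h2.le)
end
end
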